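/- Let n ≥ 3, fix a good A and buyer i with signal s_{iA} ∈ ℝ. Suppose each buyer j's valuation is v_j(s_A) = w_j(s_{jA}) + Σ_{t≠j} f_t(s_{tA}) with w_j(x) = c_j f_j(x) + d_j, c_j > 1, and each f_j continuous and nonconstant. Then there exists a unique affine function b(v_{-i}) = x_{ii} + Σ_{j≠i} x_{ij} v_j such that for all signal vectors s_A with i-th coordinate s_{iA}: b applied to (v_j(s_A))_{j≠i} equals v_i(s_A). Moreover the coefficients (x_{ij})_{j≠i} are determined by the linear system Σ requiring x_{ij} c_j + Σ_{t≠i,j} x_{it} = 1 for each j ≠ i, and x_{ii} = f_i(s_{iA})(c_i − Σ_{j≠i} x_{ij}) + d_i − Σ_{j≠i} x_{ij} d_j. -/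

import Mathlib

/-- Lemma 5.1: existence and uniqueness of the truthful affine bid function.
With valuations `v j s = w j (s j) + ∑_{t ≠ j} f t (s t)`, `w j = c j • f j + d j`,
`c j > 1`, `f j` continuous and nonconstant, for fixed own signal `siA` there is a
unique coefficient vector `y` (with `y i` the free term and `y j`, `j ≠ i`, the
coefficient of `v j`) such that
`y i + ∑_{j ≠ i} y j * v j s = v i s` for all `s` with `s i = siA`; moreover any
such `y` satisfies the linear system (5.7) and equation (5.8). -/
theorem stmt_15 (n : ℕ) (hn : 3 ≤ n) (i : Fin n) (siA : ℝ)
    (c d : Fin n → ℝ) (hc : ∀ j, 1 < c j)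
    (f w : Fin n → ℝ → ℝ)
    (hw : ∀ j x, w j x = c j * f j x + d j)
    (hfcont : ∀ j, Continuous (f j))
    (hfnc : ∀ j, ∃ x y : ℝ, f j x ≠ f j y)
    (v : Fin n → (Fin n → ℝ) → ℝ)
    (hv : ∀ j (s : Fin n → ℝ),
      v j s = w j (s j) + ∑ t ∈ Finset.univ.erase j, f t (s t)) :
    (∃! y : Fin n → ℝ, ∀ s : Fin n → ℝ, s i = siA →
      y i + ∑ j ∈ Finset.univ.erase i, y j * v j s = v i s) ∧
    (∀ y : Fin n → ℝ,
      (∀ s : Fin n → ℝ, s i = siA →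
        y i + ∑ j ∈ Finset.univ.erase i, y j * v j s = v i s) →
      (∀ j, j ≠ i →
        y j * c j + ∑ t ∈ (Finset.univ.erase i).erase j, y t = 1) ∧
      y i = f i siA * (c i - ∑ j ∈ Finset.univ.erase i, y j) + d i -
        ∑ j ∈ Finset.univ.erase i, y j * d j) := by
  classical
  have hcne : ∀ j, c j - 1 ≠ 0 := fun j => sub_ne_zero.2 (ne_of_gt (hc j))
  set E : Finset (Fin n) := Finset.univ.erase i with hEdef
  -- formula for v
  have hvf : ∀ j (s : Fin n → ℝ),
      v j s = (c j - 1) * f j (s j) + d j + ∑ t, f t (s t) := by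
    intro j s
    have h := Finset.sum_erase_add Finset.univ (fun t => f t (s t)) (Finset.mem_univ j)
    rw [hv, hw]
    linarith [h]
  -- from the identity, derive system (5.7)
  have hsys : ∀ y : Fin n → ℝ,
      (∀ s : Fin n → ℝ, s i = siA →
        y i + ∑ j ∈ E, y j * v j s = v i s) →
      ∀ j, j ≠ i → y j * c j + ∑ t ∈ E.erase j, y t = 1 := by
    intro y hy j hj
    obtain ⟨a, b, hab⟩ := hfnc j
    set s₀ : Fin n → ℝ := fun _ => siA with hs0
    set s₁ : Fin n → ℝ := Function.update s₀ j a with hs1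
    set s₂ : Fin n → ℝ := Function.update s₀ j b with hs2
    have hji : i ≠ j := fun h => hj h.symm
    have h1i : s₁ i = siA := by simp [hs1, Function.update_of_ne hji, hs0]
    have h2i : s₂ i = siA := by simp [hs2, Function.update_of_ne hji, hs0]
    have hT : ∀ x : ℝ, ∑ t, f t (Function.update s₀ j x t)
        = (∑ t ∈ Finset.univ.erase j, f t (s₀ t)) + f j x := by
      intro x
      rw [← Finset.sum_erase_add Finset.univ _ (Finset.mem_univ j)]
      congr 1
      · refine Finset.sum_congr rfl fun t ht => ?_
        rw [Function.update_of_ne (Finset.ne_of_mem_erase ht)]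
      · simp
    set Δ : ℝ := f j a - f j b with hΔ
    have hΔne : Δ ≠ 0 := sub_ne_zero.2 hab
    -- difference of v at s₁, s₂
    have hvdiff : ∀ k, k ≠ j → v k s₁ - v k s₂ = Δ := by
      intro k hk
      have hk1 : s₁ k = s₀ k := Function.update_of_ne hk _ _
      have hk2 : s₂ k = s₀ k := Function.update_of_ne hk _ _
      rw [hvf k s₁, hvf k s₂, hk1, hk2, hT a, hT b]
      ring
    have hvdiffj : v j s₁ - v j s₂ = c j * Δ := by
      have hk1 : s₁ j = a := Function.update_self _ _ _
      have hk2 : s₂ j = b := Function.update_self _ _ _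
      rw [hvf j s₁, hvf j s₂, hk1, hk2, hT a, hT b]
      ring
    have e1 := hy s₁ h1i
    have e2 := hy s₂ h2i
    have hdiff : ∑ k ∈ E, y k * (v k s₁ - v k s₂) = Δ := by
      have : ∑ k ∈ E, y k * (v k s₁ - v k s₂)
          = (∑ k ∈ E, y k * v k s₁) - ∑ k ∈ E, y k * v k s₂ := by
        rw [← Finset.sum_sub_distrib]
        exact Finset.sum_congr rfl fun k _ => by ring
      rw [this]
      have := hvdiff i hji
      linarith [e1, e2, hvdiff i hji]
    have hjE : j ∈ E := Finset.mem_erase.2 ⟨hj, Finset.mem_univ j⟩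
    rw [← Finset.add_sum_erase E _ hjE] at hdiff
    have hrest : ∑ k ∈ E.erase j, y k * (v k s₁ - v k s₂)
        = (∑ k ∈ E.erase j, y k) * Δ := by
      rw [Finset.sum_mul]
      refine Finset.sum_congr rfl fun k hk => ?_
      rw [hvdiff k (Finset.ne_of_mem_erase hk)]
    rw [hrest, hvdiffj] at hdiff
    have : (y j * c j + ∑ t ∈ E.erase j, y t) * Δ = 1 * Δ := by
      linear_combination hdiff
    have := mul_right_cancel₀ hΔne this
    linarith [this]
  -- key algebraic equivalence
  have hkey : ∀ y : Fin n → ℝ,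
      (∀ j ∈ E, y j * (c j - 1) = 1 - ∑ t ∈ E, y t) →
      ∀ s : Fin n → ℝ, s i = siA →
      ((y i + ∑ j ∈ E, y j * v j s = v i s) ↔
        y i = f i siA * (c i - ∑ t ∈ E, y t) + d i - ∑ j ∈ E, y j * d j) := by
    intro y hsy s hsi
    set S : ℝ := ∑ t ∈ E, y t with hS
    set T : ℝ := ∑ t, f t (s t) with hT
    have hEsum : ∑ j ∈ E, f j (s j) = T - f i siA := by
      have := Finset.sum_erase_add Finset.univ (fun t => f t (s t)) (Finset.mem_univ i)
      simp only [hsi] at this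
      rw [hEdef]
      linarith [this]
    have expand : ∀ j ∈ E, y j * v j s
        = (1 - S) * f j (s j) + y j * d j + y j * T := by
      intro j hj
      rw [hvf, ← hT]
      linear_combination (f j (s j)) * hsy j hj
    have hsum : ∑ j ∈ E, y j * v j s
        = (1 - S) * (T - f i siA) + (∑ j ∈ E, y j * d j) + S * T := by
      rw [Finset.sum_congr rfl expand, Finset.sum_add_distrib, Finset.sum_add_distrib,
        ← Finset.mul_sum, ← Finset.sum_mul, hEsum, ← hS]
    have hvi : v i s = (c i - 1) * f i siA + d i + T := by
      rw [hvf, hsi, ← hT]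
    rw [hsum, hvi]
    constructor <;> intro h <;> nlinarith [h]
  -- construct the solution
  have hiu : i ∈ (Finset.univ : Finset (Fin n)) := Finset.mem_univ i
  have hEne : E.Nonempty := by
    have h2 : 1 < Fintype.card (Fin n) := by simp; omega
    obtain ⟨j, hj⟩ := Fintype.exists_ne_of_one_lt_card h2 i
    exact ⟨j, Finset.mem_erase.2 ⟨hj, Finset.mem_univ j⟩⟩
  set K : ℝ := ∑ j ∈ E, (c j - 1)⁻¹ with hK
  have hKpos : 0 < K := Finset.sum_pos (fun j _ => inv_pos.2 (by linarith [hc j])) hEne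
  have h1K : (1 : ℝ) + K ≠ 0 := by positivity
  set g : Fin n → ℝ := fun j => (1 + K)⁻¹ * (c j - 1)⁻¹ with hg
  set y : Fin n → ℝ := Function.update g i
    (f i siA * (c i - ∑ j ∈ E, g j) + d i - ∑ j ∈ E, g j * d j) with hy
  have hyE : ∀ j ∈ E, y j = g j := by
    intro j hj
    exact Function.update_of_ne (Finset.ne_of_mem_erase hj) _ _
  have hySg : ∑ t ∈ E, y t = ∑ t ∈ E, g t := Finset.sum_congr rfl hyE
  have hgS : ∑ t ∈ E, g t = (1 + K)⁻¹ * K := by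
    rw [hg, hK, Finset.mul_sum]
  have hysys : ∀ j ∈ E, y j * (c j - 1) = 1 - ∑ t ∈ E, y t := by
    intro j hj
    rw [hyE j hj, hySg, hgS]
    have h2 : g j * (c j - 1) = (1 + K)⁻¹ := by
      simp only [hg]
      rw [mul_assoc, inv_mul_cancel₀ (hcne j), mul_one]
    rw [h2]
    field_simp
    ring
  have hyid : ∀ s : Fin n → ℝ, s i = siA →
      y i + ∑ j ∈ E, y j * v j s = v i s := by
    intro s hsi
    rw [hkey y hysys s hsi]
    have : y i = f i siA * (c i - ∑ j ∈ E, g j) + d i - ∑ j ∈ E, g j * d j :=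
      Function.update_self _ _ _
    have hd : ∑ j ∈ E, g j * d j = ∑ j ∈ E, y j * d j :=
      Finset.sum_congr rfl fun j hj => by rw [hyE j hj]
    rw [this, hySg, hd]
  -- any solution's restricted coefficients are determined
  have hdet : ∀ z : Fin n → ℝ,
      (∀ s : Fin n → ℝ, s i = siA →
        z i + ∑ j ∈ E, z j * v j s = v i s) → ∀ j ∈ E, z j = g j := by
    intro z hz j hj
    have hsysz := hsys z hz
    have hsysz' : ∀ j ∈ E, z j * (c j - 1) = 1 - ∑ t ∈ E, z t := by
      intro k hk
      obtain ⟨hki, _⟩ := Finset.mem_erase.1 hk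
      have h1 := hsysz k hki
      have h2 := Finset.add_sum_erase E z hk
      linarith [h1, h2]
    set Sz : ℝ := ∑ t ∈ E, z t with hSz
    have hzval : ∀ k ∈ E, z k = (1 - Sz) * (c k - 1)⁻¹ := by
      intro k hk
      have h := hsysz' k hk
      have h2 : z k * ((c k - 1) * (c k - 1)⁻¹) = (1 - Sz) * (c k - 1)⁻¹ := by
        rw [← mul_assoc, h]
      rwa [mul_inv_cancel₀ (hcne k), mul_one] at h2
    have hSzK : Sz = (1 - Sz) * K := by
      rw [hSz, hK, Finset.mul_sum]
      exact Finset.sum_congr rfl hzval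
    have hSzv : 1 - Sz = (1 + K)⁻¹ := by
      have h1 : (1 - Sz) * (1 + K) = 1 := by linear_combination (-1 : ℝ) * hSzK
      exact eq_inv_of_mul_eq_one_left h1
    rw [hzval j hj, hSzv]
  refine ⟨⟨y, hyid, ?_⟩, ?_⟩
  · -- uniqueness
    intro z hz
    funext j
    by_cases hji : j = i
    · subst hji
      have hzsys : ∀ k ∈ E, z k * (c k - 1) = 1 - ∑ t ∈ E, z t := by
        intro k hk
        obtain ⟨hki, _⟩ := Finset.mem_erase.1 hk
        have h1 := hsys z hz k hki
        have h2 := Finset.add_sum_erase E z hk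
        linarith [h1, h2]
      have hz8 := (hkey z hzsys (fun _ => siA) rfl).1 (hz (fun _ => siA) rfl)
      have hy8 := (hkey y hysys (fun _ => siA) rfl).1 (hyid (fun _ => siA) rfl)
      have hzg := hdet z hz
      have hyg : ∀ k ∈ E, y k = g k := hyE
      have hsz : ∑ t ∈ E, z t = ∑ t ∈ E, y t := by
        refine Finset.sum_congr rfl fun k hk => ?_
        rw [hzg k hk, hyg k hk]
      have hdz : ∑ t ∈ E, z t * d t = ∑ t ∈ E, y t * d t := by
        refine Finset.sum_congr rfl fun k hk => ?_
        rw [hzg k hk, hyg k hk]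
      rw [hz8, hy8, hsz, hdz]
    · have hjE : j ∈ E := Finset.mem_erase.2 ⟨hji, Finset.mem_univ j⟩
      rw [hdet z hz j hjE, hyE j hjE]
  · -- moreover part
    intro z hz
    refine ⟨hsys z hz, ?_⟩
    have hzsys : ∀ k ∈ E, z k * (c k - 1) = 1 - ∑ t ∈ E, z t := by
      intro k hk
      obtain ⟨hki, _⟩ := Finset.mem_erase.1 hk
      have h1 := hsys z hz k hki
      have h2 := Finset.add_sum_erase E z hk
      linarith [h1, h2]
    exact (hkey z hzsys (fun _ => siA) rfl).1 (hz (fun _ => siA) rfl)
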